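/- Suppose (p₁, q₁) : ℝ → ℂ² satisfies q₁' = p₁ and p₁' = 2q₁³ + t q₁ + g²/(4q₁³), with q₁(t) ≠ 0 for all t, where g ∈ ℂ is a constant. Define Q = −2^{-1/3}(p₁/q₁ − i g/(2q₁²)), P = 2^{1/3} q₁² − Q² − s/2, with s = −2^{1/3} t. Then dQ/ds = P and dP/ds = 2Q³ + sQ − i g − 1/2. -/

import Mathlib

/-- The cube root of 2. -/
noncomputable def c13 : ℝ := (2 : ℝ) ^ ((1 : ℝ) / 3)

/-- `Q = -2^{-1/3}(p₁/q₁ - i g/(2 q₁²))` at `t = -s/2^{1/3}`. -/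
noncomputable def cpQ (g : ℂ) (p q : ℝ → ℂ) (s : ℝ) : ℂ :=
  -(c13 : ℂ)⁻¹ * (p (-s / c13) / q (-s / c13)
    - Complex.I * g / (2 * q (-s / c13) ^ 2))

/-- `P = 2^{1/3} q₁² - Q² - s/2`. -/
noncomputable def cpP (g : ℂ) (p q : ℝ → ℂ) (s : ℝ) : ℂ :=
  (c13 : ℂ) * q (-s / c13) ^ 2 - (cpQ g p q s) ^ 2 - (s : ℂ) / 2

lemma c13_ne : c13 ≠ 0 := (Real.rpow_pos_of_pos (by norm_num) _).ne'

lemma c13C_ne : ((c13 : ℝ) : ℂ) ≠ 0 := by exact_mod_cast c13_ne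

lemma c13_cube : ((c13 : ℝ) : ℂ) ^ 3 = 2 := by
  have h : (c13 : ℝ) ^ 3 = 2 := by
    rw [c13, ← Real.rpow_natCast ((2:ℝ) ^ ((1:ℝ)/3)) 3, ← Real.rpow_mul (by norm_num)]
    norm_num
  exact_mod_cast h

lemma cp_alg1 (c i A B g s : ℂ) (hc : c^3 = 2) (hi : i^2 = -1)
    (hA : A ≠ 0) (hc0 : c ≠ 0) :
    c*A^2 - (-c⁻¹*(B/A - i*g/(2*A^2)))^2 - s/2
    = -c⁻¹ * ((-1/c * (2*A^3 + (-s/c)*A + g^2/(4*A^3)) * A - B*(-1/c*B))/A^2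
        - (0*(2*A^2) - i*g*(2*(2*A^1*(-1/c*B))))/(2*A^2)^2) := by
  have e : 2*A^3 + (-s/c)*A + g^2/(4*A^3) = (8*A^6*c - s*A^4*4 + g^2*c)/(4*A^3*c) := by
    field_simp; ring
  rw [e]
  field_simp
  linear_combination (16*c*A^6 - 8*s*A^4) * hc - 4*c*g^2 * hi

lemma cp_alg2 (c i A B g s : ℂ) (hA : A ≠ 0) (hc0 : c ≠ 0) :
    2 * (-c⁻¹*(B/A - i*g/(2*A^2))) ^ 3 + s * (-c⁻¹*(B/A - i*g/(2*A^2))) - i*g - 1/2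
    = c * (2 * A * (-1/c * B))
      - 2 * (-c⁻¹*(B/A - i*g/(2*A^2))) *
        (c*A^2 - (-c⁻¹*(B/A - i*g/(2*A^2)))^2 - s/2) - 1/2 := by
  have hA' : A * A⁻¹ = 1 := mul_inv_cancel₀ hA
  have hc' : c * c⁻¹ = 1 := mul_inv_cancel₀ hc0
  have hck : c * (2 * A * (-1/c * B)) = -(2*A*B) := by
    field_simp
  have hkey : 2*c*A^2*(-c⁻¹*(B/A - i*g/(2*A^2))) = -(2*A*B) + i*g := by
    linear_combination (-2*A*B*(A*A⁻¹) + i*g*(A*A⁻¹)^2) * hc'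
      + (-2*A*B + i*g*(A*A⁻¹ + 1)) * hA'
  linear_combination hkey - hck

section main
variable (g : ℂ) (p q : ℝ → ℂ)

lemma cp_hf (s : ℝ) : HasDerivAt (fun s : ℝ => -s / c13) (-1 / c13) s := by
  simpa using ((hasDerivAt_id s).neg.div_const c13)

lemma cp_hq2 (hq : ∀ t : ℝ, HasDerivAt q (p t) t) (s : ℝ) :
    HasDerivAt (fun s : ℝ => q (-s / c13))
      (((-1 / c13 : ℝ) : ℂ) * p (-s / c13)) s := by
  have h := (hq (-s / c13)).scomp s (cp_hf s)
  simp only [Complex.real_smul] at h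
  exact h

lemma cp_hp2 (hp : ∀ t : ℝ, HasDerivAt p
      (2 * q t ^ 3 + (t : ℂ) * q t + g ^ 2 / (4 * q t ^ 3)) t) (s : ℝ) :
    HasDerivAt (fun s : ℝ => p (-s / c13))
      (((-1 / c13 : ℝ) : ℂ) *
        (2 * q (-s / c13) ^ 3 + ((-s / c13 : ℝ) : ℂ) * q (-s / c13)
          + g ^ 2 / (4 * q (-s / c13) ^ 3))) s := by
  have h := (hp (-s / c13)).scomp s (cp_hf s)
  simp only [Complex.real_smul] at h
  exact h

lemma cp_hsq (hq : ∀ t : ℝ, HasDerivAt q (p t) t) (s : ℝ) :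
    HasDerivAt (fun s : ℝ => q (-s / c13) ^ 2)
      (((-1 / c13 : ℝ) : ℂ) * p (-s / c13) * q (-s / c13)
        + q (-s / c13) * (((-1 / c13 : ℝ) : ℂ) * p (-s / c13))) s := by
  simp only [pow_two]
  exact (cp_hq2 p q hq s).mul (cp_hq2 p q hq s)

lemma cp_keyQ (hq : ∀ t : ℝ, HasDerivAt q (p t) t)
    (hp : ∀ t : ℝ, HasDerivAt p
      (2 * q t ^ 3 + (t : ℂ) * q t + g ^ 2 / (4 * q t ^ 3)) t)
    (hne : ∀ t : ℝ, q t ≠ 0) (s : ℝ) :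
    HasDerivAt (cpQ g p q) (cpP g p q s) s := by
  have hA : q (-s / c13) ≠ 0 := hne _
  have h2 : (2 : ℂ) * q (-s / c13) ^ 2 ≠ 0 := by simp [hA]
  have hterm1 := (cp_hp2 g p q hp s).div (cp_hq2 p q hq s) hA
  have hden := (cp_hsq p q hq s).const_mul (2 : ℂ)
  have hterm2 := (hasDerivAt_const s (Complex.I * g)).div hden h2
  have hQ := (hterm1.sub hterm2).const_mul (-(c13 : ℂ)⁻¹)
  have hval : cpP g p q s
      = -((c13:ℝ):ℂ)⁻¹ * ((-1/((c13:ℝ):ℂ) * (2 * q (-s/c13) ^ 3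
            + (-(s:ℂ)/((c13:ℝ):ℂ)) * q (-s/c13) + g^2/(4 * q (-s/c13) ^ 3)) * q (-s/c13)
            - p (-s/c13) * (-1/((c13:ℝ):ℂ) * p (-s/c13))) / q (-s/c13) ^ 2
        - (0 * (2 * q (-s/c13) ^ 2) - Complex.I * g *
            (2 * (2 * q (-s/c13) ^ 1 * (-1/((c13:ℝ):ℂ) * p (-s/c13))))) /
          (2 * q (-s/c13) ^ 2) ^ 2) := by
    rw [cpP, cpQ]
    exact cp_alg1 _ _ _ _ _ _ c13_cube Complex.I_sq hA c13C_ne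
  rw [hval]
  refine hQ.congr_deriv ?_
  push_cast
  ring
end main

/-- g-deformed folding of two-particle Calogero–Painlevé II on its invariant subset:
the reduced variables solve Painlevé II with parameter `-1/2 - i g`. -/
theorem calogero_painleveII_folding (g : ℂ) (p q : ℝ → ℂ)
    (hq : ∀ t : ℝ, HasDerivAt q (p t) t)
    (hp : ∀ t : ℝ, HasDerivAt p
      (2 * q t ^ 3 + (t : ℂ) * q t + g ^ 2 / (4 * q t ^ 3)) t)
    (hne : ∀ t : ℝ, q t ≠ 0) :
    ∀ s : ℝ,
      HasDerivAt (cpQ g p q) (cpP g p q s) s ∧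
      HasDerivAt (cpP g p q)
        (2 * (cpQ g p q s) ^ 3 + (s : ℂ) * cpQ g p q s - Complex.I * g - 1 / 2) s := by
  intro s
  refine ⟨cp_keyQ g p q hq hp hne s, ?_⟩
  have hA : q (-s / c13) ≠ 0 := hne _
  have h1 := (cp_hsq p q hq s).const_mul ((c13 : ℝ) : ℂ)
  have h2 : HasDerivAt (fun s : ℝ => cpQ g p q s ^ 2)
      (cpP g p q s * cpQ g p q s + cpQ g p q s * cpP g p q s) s := by
    simp only [pow_two]
    exact (cp_keyQ g p q hq hp hne s).mul (cp_keyQ g p q hq hp hne s)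
  have h3 : HasDerivAt (fun s : ℝ => ((s : ℂ)) / 2) (1 / 2) s := by
    simpa using (Complex.ofRealCLM.hasDerivAt (x := s)).div_const 2
  have hP := (h1.sub h2).sub h3
  have hval : 2 * (cpQ g p q s) ^ 3 + (s : ℂ) * cpQ g p q s - Complex.I * g - 1 / 2
      = ((c13:ℝ):ℂ) * (2 * q (-s/c13) * (-1/((c13:ℝ):ℂ) * p (-s/c13)))
        - 2 * cpQ g p q s * cpP g p q s - 1 / 2 := by
    rw [cpQ, cpP, cpQ]
    exact cp_alg2 _ _ _ _ _ _ hA c13C_ne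
  rw [hval]
  refine hP.congr_deriv ?_
  push_cast
  ring
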